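/- If G ∈ QT_3, then γ_t(G) ≤ a(G) + 1. -/

import Mathlib

open SimpleGraph

/-- The total domination number of a graph. -/
noncomputable def totalDominationNumber {V : Type*} (G : SimpleGraph V) : ℕ :=
  sInf {k | ∃ D : Finset V, (∀ v : V, ∃ u ∈ D, G.Adj v u) ∧ D.card = k}

/-- The annihilation number of a graph. -/
noncomputable def annihilationNumber {V : Type*} (G : SimpleGraph V) : ℕ :=
  sSup {k | ∃ S : Finset V, S.card = k ∧ ∑ v ∈ S, (G.neighborSet v).ncard ≤ G.edgeSet.ncard}

/-- Statuses used in the definition of the family `Γ`. -/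
inductive Status
  | A | B | C

/-- A graph whose vertices are labeled with statuses. -/
structure LGraph where
  V : Type
  G : SimpleGraph V
  sta : V → Status

/-- Status-preserving isomorphism of labeled graphs. -/
def LIso (L₁ L₂ : LGraph) : Prop :=
  ∃ e : L₁.G ≃g L₂.G, ∀ v, L₂.sta (e v) = L₁.sta v

/-- The base labeled tree `T₀`: a path `P₆` whose two leaves have status `C`,
whose two support vertices have status `A`, and whose middle vertices have status `B`. -/
def baseT0 : LGraph where
  V := Fin 6
  G := SimpleGraph.fromRel (fun i j => (i : ℕ) + 1 = (j : ℕ))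
  sta := ![Status.C, Status.A, Status.B, Status.B, Status.A, Status.C]

/-- Operation `o₁`: to a labeled graph `L` with chosen vertex `y`, attach a new path
`x–w–v–z` (the vertices `Sum.inr 0, 1, 2, 3`) together with the edge `x y`, statuses
`sta x = sta w = B`, `sta v = A`, `sta z = C`. -/
def o1Ext (L : LGraph) (y : L.V) : LGraph where
  V := L.V ⊕ Fin 4
  G := (L.G.map Function.Embedding.inl) ⊔
    SimpleGraph.fromEdgeSet
      {s(Sum.inl y, Sum.inr 0), s(Sum.inr 0, Sum.inr 1),
       s(Sum.inr 1, Sum.inr 2), s(Sum.inr 2, Sum.inr 3)}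
  sta := Sum.elim L.sta ![Status.B, Status.B, Status.A, Status.C]

/-- Operation `o₂`: to a labeled graph `L` with chosen vertex `y`, attach a new path
`x–w–v` (the vertices `Sum.inr 0, 1, 2`) together with the edge `x y`, statuses
`sta x = B`, `sta w = A`, `sta v = C`. -/
def o2Ext (L : LGraph) (y : L.V) : LGraph where
  V := L.V ⊕ Fin 3
  G := (L.G.map Function.Embedding.inl) ⊔
    SimpleGraph.fromEdgeSet
      {s(Sum.inl y, Sum.inr 0), s(Sum.inr 0, Sum.inr 1), s(Sum.inr 1, Sum.inr 2)}
  sta := Sum.elim L.sta ![Status.B, Status.A, Status.C]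

/-- The family `Γ` of labeled trees (closed under status-preserving isomorphism):
it contains `T₀` and is closed under operation `o₁` (applied at a leaf of status `C`)
and operation `o₂` (applied at a vertex of status `B`). -/
inductive InGamma : LGraph → Prop
  | base (L : LGraph) : LIso baseT0 L → InGamma L
  | op1 (L : LGraph) (y : L.V) (hL : InGamma L) (hsta : L.sta y = Status.C)
      (hleaf : (L.G.neighborSet y).ncard = 1) (L' : LGraph) (h : LIso (o1Ext L y) L') :
      InGamma L'
  | op2 (L : LGraph) (y : L.V) (hL : InGamma L) (hsta : L.sta y = Status.B)
      (L' : LGraph) (h : LIso (o2Ext L y) L') : InGamma L'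

/-- Add one new vertex `h = Sum.inr ()` to `G` and join it to every vertex in `S`. -/
def attachVertex {V : Type} (G : SimpleGraph V) (S : Set V) : SimpleGraph (V ⊕ Unit) :=
  (G.map Function.Embedding.inl) ⊔
    SimpleGraph.fromEdgeSet {e | ∃ u ∈ S, e = s(Sum.inl u, Sum.inr ())}

/-! ### Auxiliary material -/

section SupMap
variable {V W : Type} (G : SimpleGraph V) (E : Set (Sym2 (V ⊕ W)))

lemma supMap_adj (a b : V ⊕ W) :
    ((G.map Function.Embedding.inl) ⊔ SimpleGraph.fromEdgeSet E).Adj a b ↔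
      (∃ u v, G.Adj u v ∧ Sum.inl u = a ∧ Sum.inl v = b) ∨ (s(a, b) ∈ E ∧ a ≠ b) := by
  simp [SimpleGraph.map_adj, SimpleGraph.fromEdgeSet_adj]

lemma supMap_adj_inl {u v : V} (h : G.Adj u v) :
    ((G.map Function.Embedding.inl) ⊔ SimpleGraph.fromEdgeSet E).Adj (Sum.inl u) (Sum.inl v) :=
  (supMap_adj G E _ _).2 (Or.inl ⟨u, v, h, rfl, rfl⟩)

lemma supMap_adj_edge {a b : V ⊕ W} (h : s(a, b) ∈ E) (hne : a ≠ b) :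
    ((G.map Function.Embedding.inl) ⊔ SimpleGraph.fromEdgeSet E).Adj a b :=
  (supMap_adj G E _ _).2 (Or.inr ⟨h, hne⟩)

variable [Finite V] [Finite W]

lemma deg_supMap_inl (u : V) (F : Set (V ⊕ W)) (hF : {b | s(Sum.inl u, b) ∈ E} ⊆ F) :
    (((G.map Function.Embedding.inl) ⊔ SimpleGraph.fromEdgeSet E).neighborSet
        (Sum.inl u)).ncard ≤ (G.neighborSet u).ncard + F.ncard := by
  have hsub : ((G.map Function.Embedding.inl) ⊔ SimpleGraph.fromEdgeSet E).neighborSet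
      (Sum.inl u) ⊆ (Sum.inl '' G.neighborSet u) ∪ F := by
    intro b hb
    rw [SimpleGraph.mem_neighborSet, supMap_adj] at hb
    rcases hb with ⟨u', v', hadj, h1, h2⟩ | ⟨hmem, _⟩
    · rcases Sum.inl.inj h1 with rfl
      exact Or.inl ⟨v', hadj, h2⟩
    · exact Or.inr (hF hmem)
  calc _ ≤ ((Sum.inl '' G.neighborSet u) ∪ F).ncard :=
        Set.ncard_le_ncard hsub (Set.toFinite _)
    _ ≤ (Sum.inl '' G.neighborSet u).ncard + F.ncard := Set.ncard_union_le _ _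
    _ = (G.neighborSet u).ncard + F.ncard := by
        rw [Set.ncard_image_of_injective _ Sum.inl_injective]

lemma deg_supMap_inr (w : W) (F : Set (V ⊕ W)) (hF : {b | s(Sum.inr w, b) ∈ E} ⊆ F) :
    (((G.map Function.Embedding.inl) ⊔ SimpleGraph.fromEdgeSet E).neighborSet
        (Sum.inr w)).ncard ≤ F.ncard := by
  refine Set.ncard_le_ncard ?_ (Set.toFinite _)
  intro b hb
  rw [SimpleGraph.mem_neighborSet, supMap_adj] at hb
  rcases hb with ⟨u', v', _, h1, _⟩ | ⟨hmem, _⟩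
  · exact absurd h1 (by simp)
  · exact hF hmem

omit [Finite V] [Finite W] in
lemma supMap_mapEdges_subset :
    Sym2.map Sum.inl '' G.edgeSet ⊆
      ((G.map Function.Embedding.inl) ⊔ SimpleGraph.fromEdgeSet E).edgeSet := by
  rintro z ⟨z', hz', rfl⟩
  induction z' using Sym2.ind with
  | _ u v =>
    rw [Sym2.map_pair_eq, SimpleGraph.mem_edgeSet]
    exact supMap_adj_inl G E hz'

end SupMap

instance sym2Finite {α : Type*} [Finite α] : Finite (Sym2 α) :=
  Finite.of_surjective (fun p : α × α => s(p.1, p.2))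
    (fun z => Sym2.ind (fun x y => ⟨(x, y), rfl⟩) z)

lemma ncard_edge_lb {α : Type} [Finite α] (H : SimpleGraph α) (A B : Set (Sym2 α))
    (hA : A ⊆ H.edgeSet) (hB : B ⊆ H.edgeSet) (hd : Disjoint A B) :
    A.ncard + B.ncard ≤ H.edgeSet.ncard := by
  rw [← Set.ncard_union_eq hd (Set.toFinite _) (Set.toFinite _)]
  exact Set.ncard_le_ncard (Set.union_subset hA hB) (Set.toFinite _)

/-- The inductive invariant carried along the family `Γ`. -/
def GInv (L : LGraph) : Prop :=
  Finite L.V ∧ ∃ D S : Finset L.V,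
    (∀ v : L.V, ∃ u ∈ D, L.G.Adj v u) ∧ D.card = S.card + 1 ∧
    (∀ v ∈ S, L.sta v ≠ Status.B) ∧
    (∑ v ∈ S, (L.G.neighborSet v).ncard) + 1 ≤ L.G.edgeSet.ncard

lemma iso_neighborSet_ncard {V W : Type} {G : SimpleGraph V} {H : SimpleGraph W}
    (e : G ≃g H) (v : V) :
    (H.neighborSet (e v)).ncard = (G.neighborSet v).ncard := by
  have : H.neighborSet (e v) = e '' G.neighborSet v := by
    ext b
    simp only [SimpleGraph.mem_neighborSet, Set.mem_image]
    constructor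
    · intro hadj
      refine ⟨e.symm b, ?_, e.apply_symm_apply b⟩
      have := e.symm.map_adj_iff.mpr hadj
      simpa using this
    · rintro ⟨a, ha, rfl⟩
      exact e.map_adj_iff.mpr ha
  rw [this, Set.ncard_image_of_injective _ (EquivLike.injective e)]

lemma iso_edgeSet_ncard {V W : Type} {G : SimpleGraph V} {H : SimpleGraph W}
    (e : G ≃g H) : H.edgeSet.ncard = G.edgeSet.ncard := by
  have : H.edgeSet = Sym2.map e '' G.edgeSet := by
    ext z
    induction z using Sym2.ind with
    | _ a b =>
      simp only [SimpleGraph.mem_edgeSet, Set.mem_image]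
      constructor
      · intro hadj
        refine ⟨s(e.symm a, e.symm b), ?_, by simp [Sym2.map_pair_eq]⟩
        have := e.symm.map_adj_iff.mpr hadj
        simpa using this
      · rintro ⟨z', hz', hmap⟩
        induction z' using Sym2.ind with
        | _ u v =>
          rw [Sym2.map_pair_eq, Sym2.eq_iff] at hmap
          rw [SimpleGraph.mem_edgeSet] at hz'
          rcases hmap with ⟨rfl, rfl⟩ | ⟨rfl, rfl⟩
          · exact e.map_adj_iff.mpr hz'
          · exact (e.map_adj_iff.mpr hz').symm
  rw [this, Set.ncard_image_of_injective _ (Sym2.map.injective (EquivLike.injective e))]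

lemma GInv_liso {L₁ L₂ : LGraph} (h : LIso L₁ L₂) (h1 : GInv L₁) : GInv L₂ := by
  classical
  obtain ⟨e, hsta⟩ := h
  obtain ⟨hfin, D, S, hD, hcard, hS, hsum⟩ := h1
  haveI := hfin
  have hinj : Function.Injective e := EquivLike.injective e
  refine ⟨Finite.of_equiv _ e.toEquiv, D.image e, S.image e, ?_, ?_, ?_, ?_⟩
  · intro v
    obtain ⟨u, hu, hadj⟩ := hD (e.symm v)
    refine ⟨e u, Finset.mem_image_of_mem _ hu, ?_⟩
    have := e.map_adj_iff.mpr hadj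
    simpa using this
  · rw [Finset.card_image_of_injective _ hinj, Finset.card_image_of_injective _ hinj, hcard]
  · intro v hv
    obtain ⟨u, hu, rfl⟩ := Finset.mem_image.mp hv
    rw [hsta u]
    exact hS u hu
  · rw [Finset.sum_image (fun x _ y _ hxy => hinj hxy)]
    calc (∑ v ∈ S, (L₂.G.neighborSet (e v)).ncard) + 1
        = (∑ v ∈ S, (L₁.G.neighborSet v).ncard) + 1 := by
          congr 1; exact Finset.sum_congr rfl fun v _ => iso_neighborSet_ncard e v
      _ ≤ L₁.G.edgeSet.ncard := hsum
      _ = L₂.G.edgeSet.ncard := (iso_edgeSet_ncard e).symm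

lemma GInv_mk {V : Type} (G : SimpleGraph V) (sta : V → Status) (fin : Finite V)
    (D S : Finset V) (h1 : ∀ v : V, ∃ u ∈ D, G.Adj v u) (h2 : D.card = S.card + 1)
    (hS : ∀ v ∈ S, sta v ≠ Status.B)
    (h3 : (∑ v ∈ S, (G.neighborSet v).ncard) + 1 ≤ G.edgeSet.ncard) :
    GInv ⟨V, G, sta⟩ :=
  ⟨fin, D, S, h1, h2, hS, h3⟩

lemma GInv_base : GInv baseT0 := by
  refine GInv_mk (V := Fin 6) (SimpleGraph.fromRel (fun i j => (i : ℕ) + 1 = (j : ℕ)))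
    ![Status.C, Status.A, Status.B, Status.B, Status.A, Status.C] inferInstance
    ({1, 2, 3, 4} : Finset (Fin 6)) ({0, 1, 5} : Finset (Fin 6)) ?_ (by decide)
    (by
      intro v hv
      fin_cases hv
      · show ¬ Status.C = Status.B; intro h; cases h
      · show ¬ Status.A = Status.B; intro h; cases h
      · show ¬ Status.C = Status.B; intro h; cases h) ?_
  all_goals
    set B : SimpleGraph (Fin 6) :=
      SimpleGraph.fromRel (fun i j => (i : ℕ) + 1 = (j : ℕ)) with hB
  · have hadj : ∀ a b : Fin 6, (a : ℕ) + 1 = (b : ℕ) → B.Adj a b := by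
      intro a b hab
      rw [hB, SimpleGraph.fromRel_adj]
      exact ⟨by intro h; subst h; omega, Or.inl hab⟩
    intro v
    fin_cases v
    · exact ⟨1, by decide, hadj 0 1 (by decide)⟩
    · exact ⟨2, by decide, hadj 1 2 (by decide)⟩
    · exact ⟨3, by decide, hadj 2 3 (by decide)⟩
    · exact ⟨2, by decide, (hadj 2 3 (by decide)).symm⟩
    · exact ⟨3, by decide, (hadj 3 4 (by decide)).symm⟩
    · exact ⟨4, by decide, (hadj 4 5 (by decide)).symm⟩
  · have hdeg : ∀ a : Fin 6, ∀ F : Set (Fin 6), (B.neighborSet a ⊆ F) →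
        (B.neighborSet a).ncard ≤ F.ncard := fun a F hF =>
      Set.ncard_le_ncard hF (Set.toFinite _)
    have h0 : (B.neighborSet (0 : Fin 6)).ncard ≤ 1 := by
      have := hdeg 0 {1} ?_
      · simpa using this
      · intro b hb
        rw [SimpleGraph.mem_neighborSet, hB, SimpleGraph.fromRel_adj] at hb
        obtain ⟨hne, h | h⟩ := hb
        · simp only [Set.mem_singleton_iff]; exact Fin.ext (by omega)
        · omega
    have h1 : (B.neighborSet (1 : Fin 6)).ncard ≤ 2 := by
      have := hdeg 1 {0, 2} ?_
      · have h02 : ({0, 2} : Set (Fin 6)).ncard = 2 := Set.ncard_pair (by decide)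
        omega
      · intro b hb
        rw [SimpleGraph.mem_neighborSet, hB, SimpleGraph.fromRel_adj] at hb
        obtain ⟨hne, h | h⟩ := hb
        · exact Or.inr (Fin.ext (by omega))
        · exact Or.inl (Fin.ext (by omega))
    have h5 : (B.neighborSet (5 : Fin 6)).ncard ≤ 1 := by
      have := hdeg 5 {4} ?_
      · simpa using this
      · intro b hb
        rw [SimpleGraph.mem_neighborSet, hB, SimpleGraph.fromRel_adj] at hb
        obtain ⟨hne, h | h⟩ := hb
        · omega
        · simp only [Set.mem_singleton_iff]; exact Fin.ext (by omega)
    have hm : 5 ≤ B.edgeSet.ncard := by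
      have hsub : (↑({s(0,1), s(1,2), s(2,3), s(3,4), s(4,5)} :
          Finset (Sym2 (Fin 6))) : Set (Sym2 (Fin 6))) ⊆ B.edgeSet := by
        intro z hz
        simp only [Finset.coe_insert, Finset.coe_singleton, Set.mem_insert_iff,
          Set.mem_singleton_iff] at hz
        rcases hz with rfl | rfl | rfl | rfl | rfl <;>
          · rw [SimpleGraph.mem_edgeSet, hB, SimpleGraph.fromRel_adj]
            exact ⟨by decide, Or.inl (by decide)⟩
      have := Set.ncard_le_ncard hsub (Set.toFinite _)
      rwa [Set.ncard_coe_finset, show ({s(0,1), s(1,2), s(2,3), s(3,4), s(4,5)} :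
        Finset (Sym2 (Fin 6))).card = 5 from by decide] at this
    rw [Finset.sum_insert (by decide), Finset.sum_insert (by decide),
      Finset.sum_singleton]
    omega

lemma GInv_o1 (L : LGraph) (y : L.V) (h : GInv L) : GInv (o1Ext L y) := by
  classical
  obtain ⟨hfin, D, S, hD, hcard, hSsta, hsum⟩ := h
  haveI := hfin
  set E1 : Set (Sym2 (L.V ⊕ Fin 4)) :=
    {s(Sum.inl y, Sum.inr 0), s(Sum.inr 0, Sum.inr 1),
     s(Sum.inr 1, Sum.inr 2), s(Sum.inr 2, Sum.inr 3)} with hE1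
  set G1 := (L.G.map Function.Embedding.inl) ⊔ SimpleGraph.fromEdgeSet E1 with hG1
  refine GInv_mk (V := L.V ⊕ Fin 4) G1 (Sum.elim L.sta ![Status.B, Status.B, Status.A, Status.C])
    inferInstance (D.image Sum.inl ∪ {Sum.inr 1, Sum.inr 2})
    (S.image Sum.inl ∪ {Sum.inr 2, Sum.inr 3}) ?_ ?_ ?_ ?_
  · intro a
    rcases a with u | i
    · obtain ⟨q, hq, hadj⟩ := hD u
      exact ⟨Sum.inl q, by simp [hq], supMap_adj_inl L.G E1 hadj⟩
    · fin_cases i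
      · exact ⟨Sum.inr 1, by simp, supMap_adj_edge L.G E1 (by simp [hE1]) (by simp)⟩
      · exact ⟨Sum.inr 2, by simp, supMap_adj_edge L.G E1 (by simp [hE1]) (by simp)⟩
      · exact ⟨Sum.inr 1, by simp,
          (supMap_adj_edge L.G E1 (by simp [hE1]) (by simp)).symm⟩
      · exact ⟨Sum.inr 2, by simp,
          (supMap_adj_edge L.G E1 (by simp [hE1, Sym2.eq_iff]) (by simp)).symm⟩
  · rw [Finset.card_union_of_disjoint (by simp [Finset.disjoint_left]),
      Finset.card_union_of_disjoint (by simp [Finset.disjoint_left]),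
      Finset.card_image_of_injective _ Sum.inl_injective,
      Finset.card_image_of_injective _ Sum.inl_injective,
      Finset.card_pair (by simp), Finset.card_pair (by simp), hcard]
  · intro a ha
    simp only [Finset.mem_union, Finset.mem_image, Finset.mem_insert,
      Finset.mem_singleton] at ha
    rcases ha with ⟨u, hu, rfl⟩ | rfl | rfl
    · exact hSsta u hu
    · show ¬ Status.A = Status.B; intro hc; cases hc
    · show ¬ Status.C = Status.B; intro hc; cases hc
  · have hdegv : ∀ v : L.V, ((G1.neighborSet (Sum.inl v)).ncard : ℕ) ≤
        (L.G.neighborSet v).ncard + (if v = y then 1 else 0) := by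
      intro v
      by_cases hv : v = y
      · subst hv
        rw [if_pos rfl]
        have := deg_supMap_inl L.G E1 v {Sum.inr 0} ?_
        · simpa [hG1] using this
        · intro b hb
          simp only [hE1, Set.mem_insert_iff, Set.mem_singleton_iff, Sym2.eq_iff,
            Set.mem_setOf_eq, Sum.inl.injEq, reduceCtorEq, and_false, false_and,
            or_false, false_or, and_true, true_and] at hb
          simp [hb]
      · rw [if_neg hv]
        have := deg_supMap_inl L.G E1 v (∅ : Set (L.V ⊕ Fin 4)) ?_
        · simpa [hG1] using this
        · intro b hb
          exfalso
          simp only [hE1, Set.mem_insert_iff, Set.mem_singleton_iff, Sym2.eq_iff,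
            Set.mem_setOf_eq, Sum.inl.injEq, reduceCtorEq, and_false, false_and,
            or_false, false_or, and_true, true_and] at hb
          tauto
    have hdeg2 : (G1.neighborSet (Sum.inr 2)).ncard ≤ 2 := by
      have h2' := deg_supMap_inr L.G E1 2 {Sum.inr 1, Sum.inr 3} ?_
      · rw [Set.ncard_pair (by simp)] at h2'
        exact h2'
      · intro b hb
        simp only [hE1, Set.mem_insert_iff, Set.mem_singleton_iff, Sym2.eq_iff,
          Set.mem_setOf_eq, reduceCtorEq, Sum.inr.injEq, and_false, false_and,
          or_false, false_or, and_true, true_and] at hb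
        simp_all
    have hdeg3 : (G1.neighborSet (Sum.inr 3)).ncard ≤ 1 := by
      have := deg_supMap_inr L.G E1 3 {Sum.inr 2} ?_
      · simpa [hG1] using this
      · intro b hb
        simp only [hE1, Set.mem_insert_iff, Set.mem_singleton_iff, Sym2.eq_iff,
          Set.mem_setOf_eq, reduceCtorEq, Sum.inr.injEq, and_false, false_and,
          or_false, false_or, and_true, true_and] at hb
        simp_all
    have hm : L.G.edgeSet.ncard + 4 ≤ G1.edgeSet.ncard := by
      have hA : Sym2.map Sum.inl '' L.G.edgeSet ⊆ G1.edgeSet :=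
        supMap_mapEdges_subset L.G E1
      have hB : E1 ⊆ G1.edgeSet := by
        intro z hz
        simp only [hE1, Set.mem_insert_iff, Set.mem_singleton_iff] at hz
        rcases hz with rfl | rfl | rfl | rfl <;>
          exact supMap_adj_edge L.G E1 (by simp [hE1]) (by simp)
      have hd : Disjoint (Sym2.map Sum.inl '' L.G.edgeSet) E1 := by
        rw [Set.disjoint_left]
        rintro z ⟨z', _, rfl⟩ hz
        induction z' using Sym2.ind with
        | _ u v =>
          rw [Sym2.map_pair_eq] at hz
          simp [hE1, Sym2.eq_iff] at hz
      have hcardE1 : E1.ncard = 4 := by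
        rw [hE1, Set.ncard_insert_of_notMem (by simp [Sym2.eq_iff]),
          Set.ncard_insert_of_notMem (by simp [Sym2.eq_iff]),
          Set.ncard_insert_of_notMem (by simp [Sym2.eq_iff]), Set.ncard_singleton]
      have := ncard_edge_lb G1 _ _ hA hB hd
      rwa [Set.ncard_image_of_injective _ (Sym2.map.injective Sum.inl_injective),
        hcardE1] at this
    rw [Finset.sum_union (by simp [Finset.disjoint_left]),
      Finset.sum_image (fun x _ y _ hxy => Sum.inl_injective hxy),
      Finset.sum_insert (by simp), Finset.sum_singleton]
    have hS : ∑ v ∈ S, (G1.neighborSet (Sum.inl v)).ncard ≤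
        (∑ v ∈ S, (L.G.neighborSet v).ncard) + 1 := by
      calc ∑ v ∈ S, (G1.neighborSet (Sum.inl v)).ncard
          ≤ ∑ v ∈ S, ((L.G.neighborSet v).ncard + (if v = y then 1 else 0)) :=
            Finset.sum_le_sum fun v _ => hdegv v
        _ = (∑ v ∈ S, (L.G.neighborSet v).ncard) + ∑ v ∈ S, (if v = y then 1 else 0) :=
            Finset.sum_add_distrib
        _ ≤ (∑ v ∈ S, (L.G.neighborSet v).ncard) + 1 := by
            have := Finset.sum_ite_eq' S y (fun _ => (1 : ℕ))
            simp only [this]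
            split <;> omega
    omega

lemma GInv_o2 (L : LGraph) (y : L.V) (hsta : L.sta y = Status.B) (h : GInv L) :
    GInv (o2Ext L y) := by
  classical
  obtain ⟨hfin, D, S, hD, hcard, hSsta, hsum⟩ := h
  haveI := hfin
  have hyS : y ∉ S := fun hy => hSsta y hy hsta
  set E2 : Set (Sym2 (L.V ⊕ Fin 3)) :=
    {s(Sum.inl y, Sum.inr 0), s(Sum.inr 0, Sum.inr 1), s(Sum.inr 1, Sum.inr 2)} with hE2
  set G1 := (L.G.map Function.Embedding.inl) ⊔ SimpleGraph.fromEdgeSet E2 with hG1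
  refine GInv_mk (V := L.V ⊕ Fin 3) G1 (Sum.elim L.sta ![Status.B, Status.A, Status.C])
    inferInstance (D.image Sum.inl ∪ {Sum.inr 0, Sum.inr 1})
    (S.image Sum.inl ∪ {Sum.inr 1, Sum.inr 2}) ?_ ?_ ?_ ?_
  · intro a
    rcases a with u | i
    · obtain ⟨q, hq, hadj⟩ := hD u
      exact ⟨Sum.inl q, by simp [hq], supMap_adj_inl L.G E2 hadj⟩
    · fin_cases i
      · exact ⟨Sum.inr 1, by simp, supMap_adj_edge L.G E2 (by simp [hE2]) (by simp)⟩
      · exact ⟨Sum.inr 0, by simp,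
          (supMap_adj_edge L.G E2 (by simp [hE2]) (by simp)).symm⟩
      · exact ⟨Sum.inr 1, by simp,
          (supMap_adj_edge L.G E2 (by simp [hE2, Sym2.eq_iff]) (by simp)).symm⟩
  · rw [Finset.card_union_of_disjoint (by simp [Finset.disjoint_left]),
      Finset.card_union_of_disjoint (by simp [Finset.disjoint_left]),
      Finset.card_image_of_injective _ Sum.inl_injective,
      Finset.card_image_of_injective _ Sum.inl_injective,
      Finset.card_pair (by simp), Finset.card_pair (by simp), hcard]
  · intro a ha
    simp only [Finset.mem_union, Finset.mem_image, Finset.mem_insert,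
      Finset.mem_singleton] at ha
    rcases ha with ⟨u, hu, rfl⟩ | rfl | rfl
    · exact hSsta u hu
    · show ¬ Status.A = Status.B; intro hc; cases hc
    · show ¬ Status.C = Status.B; intro hc; cases hc
  · have hdegv : ∀ v ∈ S, ((G1.neighborSet (Sum.inl v)).ncard : ℕ) ≤
        (L.G.neighborSet v).ncard := by
      intro v hv
      have hvy : v ≠ y := fun hc => hyS (hc ▸ hv)
      have := deg_supMap_inl L.G E2 v (∅ : Set (L.V ⊕ Fin 3)) ?_
      · simpa [hG1] using this
      · intro b hb
        exfalso
        simp only [hE2, Set.mem_insert_iff, Set.mem_singleton_iff, Sym2.eq_iff,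
          Set.mem_setOf_eq, Sum.inl.injEq, reduceCtorEq, and_false, false_and,
          or_false, false_or, and_true, true_and] at hb
        tauto
    have hdeg1 : (G1.neighborSet (Sum.inr 1)).ncard ≤ 2 := by
      have h2' := deg_supMap_inr L.G E2 1 {Sum.inr 0, Sum.inr 2} ?_
      · rw [Set.ncard_pair (by simp)] at h2'
        exact h2'
      · intro b hb
        simp only [hE2, Set.mem_insert_iff, Set.mem_singleton_iff, Sym2.eq_iff,
          Set.mem_setOf_eq, reduceCtorEq, Sum.inr.injEq, and_false, false_and,
          or_false, false_or, and_true, true_and] at hb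
        simp_all
    have hdeg2 : (G1.neighborSet (Sum.inr 2)).ncard ≤ 1 := by
      have := deg_supMap_inr L.G E2 2 {Sum.inr 1} ?_
      · simpa [hG1] using this
      · intro b hb
        simp only [hE2, Set.mem_insert_iff, Set.mem_singleton_iff, Sym2.eq_iff,
          Set.mem_setOf_eq, reduceCtorEq, Sum.inr.injEq, and_false, false_and,
          or_false, false_or, and_true, true_and] at hb
        simp_all
    have hm : L.G.edgeSet.ncard + 3 ≤ G1.edgeSet.ncard := by
      have hA : Sym2.map Sum.inl '' L.G.edgeSet ⊆ G1.edgeSet :=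
        supMap_mapEdges_subset L.G E2
      have hB : E2 ⊆ G1.edgeSet := by
        intro z hz
        simp only [hE2, Set.mem_insert_iff, Set.mem_singleton_iff] at hz
        rcases hz with rfl | rfl | rfl <;>
          exact supMap_adj_edge L.G E2 (by simp [hE2]) (by simp)
      have hd : Disjoint (Sym2.map Sum.inl '' L.G.edgeSet) E2 := by
        rw [Set.disjoint_left]
        rintro z ⟨z', _, rfl⟩ hz
        induction z' using Sym2.ind with
        | _ u v =>
          rw [Sym2.map_pair_eq] at hz
          simp [hE2, Sym2.eq_iff] at hz
      have hcardE2 : E2.ncard = 3 := by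
        rw [hE2, Set.ncard_insert_of_notMem (by simp [Sym2.eq_iff]),
          Set.ncard_insert_of_notMem (by simp [Sym2.eq_iff]), Set.ncard_singleton]
      have := ncard_edge_lb G1 _ _ hA hB hd
      rwa [Set.ncard_image_of_injective _ (Sym2.map.injective Sum.inl_injective),
        hcardE2] at this
    rw [Finset.sum_union (by simp [Finset.disjoint_left]),
      Finset.sum_image (fun x _ y _ hxy => Sum.inl_injective hxy),
      Finset.sum_insert (by simp), Finset.sum_singleton]
    have hS : ∑ v ∈ S, (G1.neighborSet (Sum.inl v)).ncard ≤
        ∑ v ∈ S, (L.G.neighborSet v).ncard :=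
      Finset.sum_le_sum hdegv
    omega

lemma GInv_of_InGamma {L : LGraph} (h : InGamma L) : GInv L := by
  induction h with
  | base L hL => exact GInv_liso hL GInv_base
  | op1 L y hL hsta hleaf L' hiso ih => exact GInv_liso hiso (GInv_o1 L y ih)
  | op2 L y hL hsta L' hiso ih => exact GInv_liso hiso (GInv_o2 L y hsta ih)

/-- If `G ∈ QT₃`, i.e. `G` is obtained from a tree `T' = o1Ext T y ∈ Γ₁`
(where `T ∈ Γ`, `y` is a leaf of `T` of status `C`, and `x, w, v, z` are the vertices
added in the last step) and a new vertex `h` by adding `t ≥ 2` edges between `h` and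
`{x, w, v, z}`, then `γₜ(G) ≤ a(G) + 1`. -/
theorem stmt_3 (T : LGraph) (y : T.V)
    (hT : InGamma T) (hy : T.sta y = Status.C) (hleaf : (T.G.neighborSet y).ncard = 1)
    (N : Finset (Fin 4)) (htN : 2 ≤ N.card)
    (G : SimpleGraph ((T.V ⊕ Fin 4) ⊕ Unit))
    (hG : G = attachVertex (o1Ext T y).G (Sum.inr '' (N : Set (Fin 4)))) :
    totalDominationNumber G ≤ annihilationNumber G + 1 := by
  classical
  obtain ⟨hfinT, D, S, hD, hcard, hSsta, hsum⟩ := GInv_of_InGamma hT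
  haveI := hfinT
  set E1 : Set (Sym2 (T.V ⊕ Fin 4)) :=
    {s(Sum.inl y, Sum.inr 0), s(Sum.inr 0, Sum.inr 1),
     s(Sum.inr 1, Sum.inr 2), s(Sum.inr 2, Sum.inr 3)} with hE1
  set H := (T.G.map Function.Embedding.inl) ⊔ SimpleGraph.fromEdgeSet E1 with hH
  set NS : Set (T.V ⊕ Fin 4) := Sum.inr '' (N : Set (Fin 4)) with hNS
  set EN : Set (Sym2 ((T.V ⊕ Fin 4) ⊕ Unit)) :=
    {e | ∃ u ∈ NS, e = s(Sum.inl u, Sum.inr ())} with hEN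
  have hGdef : G = (H.map Function.Embedding.inl) ⊔ SimpleGraph.fromEdgeSet EN := hG
  subst hGdef
  -- basic H adjacencies
  have hTadj : ∀ {u v : T.V}, T.G.Adj u v → H.Adj (Sum.inl u) (Sum.inl v) :=
    fun h => supMap_adj_inl T.G E1 h
  have h01 : H.Adj (Sum.inr 0) (Sum.inr 1) :=
    supMap_adj_edge T.G E1 (by simp [hE1]) (by simp)
  have h12 : H.Adj (Sum.inr 1) (Sum.inr 2) :=
    supMap_adj_edge T.G E1 (by simp [hE1]) (by simp)
  have h23 : H.Adj (Sum.inr 2) (Sum.inr 3) :=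
    supMap_adj_edge T.G E1 (by simp [hE1, Sym2.eq_iff]) (by simp)
  -- lifted adjacencies
  have gadj : ∀ {a b : T.V ⊕ Fin 4}, H.Adj a b →
      ((H.map Function.Embedding.inl) ⊔ SimpleGraph.fromEdgeSet EN).Adj
        (Sum.inl a) (Sum.inl b) := fun h => supMap_adj_inl H EN h
  have ghadj : ∀ n ∈ N, ((H.map Function.Embedding.inl) ⊔
      SimpleGraph.fromEdgeSet EN).Adj (Sum.inr ()) (Sum.inl (Sum.inr n)) := by
    intro n hn
    refine supMap_adj_edge H EN ⟨Sum.inr n, ⟨n, hn, rfl⟩, Sym2.eq_swap⟩ (by simp)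
  -- degrees in H
  have hdegv : ∀ v : T.V, ((H.neighborSet (Sum.inl v)).ncard : ℕ) ≤
      (T.G.neighborSet v).ncard + (if v = y then 1 else 0) := by
    intro v
    by_cases hv : v = y
    · subst hv
      rw [if_pos rfl]
      have := deg_supMap_inl T.G E1 v {Sum.inr 0} ?_
      · simpa [hH] using this
      · intro b hb
        simp only [hE1, Set.mem_insert_iff, Set.mem_singleton_iff, Sym2.eq_iff,
          Set.mem_setOf_eq, Sum.inl.injEq, reduceCtorEq, and_false, false_and,
          or_false, false_or, and_true, true_and] at hb
        simp [hb]
    · rw [if_neg hv]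
      have := deg_supMap_inl T.G E1 v (∅ : Set (T.V ⊕ Fin 4)) ?_
      · simpa [hH] using this
      · intro b hb
        exfalso
        simp only [hE1, Set.mem_insert_iff, Set.mem_singleton_iff, Sym2.eq_iff,
          Set.mem_setOf_eq, Sum.inl.injEq, reduceCtorEq, and_false, false_and,
          or_false, false_or, and_true, true_and] at hb
        tauto
  have hdegH1 : (H.neighborSet (Sum.inr 1)).ncard ≤ 2 := by
    have h2' := deg_supMap_inr T.G E1 1 {Sum.inr 0, Sum.inr 2} ?_
    · rw [Set.ncard_pair (by simp)] at h2'
      exact h2'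
    · intro b hb
      simp only [hE1, Set.mem_insert_iff, Set.mem_singleton_iff, Sym2.eq_iff,
        Set.mem_setOf_eq, reduceCtorEq, Sum.inr.injEq, and_false, false_and,
        or_false, false_or, and_true, true_and] at hb
      simp_all
  have hdegH3 : (H.neighborSet (Sum.inr 3)).ncard ≤ 1 := by
    have := deg_supMap_inr T.G E1 3 {Sum.inr 2} ?_
    · simpa [hH] using this
    · intro b hb
      simp only [hE1, Set.mem_insert_iff, Set.mem_singleton_iff, Sym2.eq_iff,
        Set.mem_setOf_eq, reduceCtorEq, Sum.inr.injEq, and_false, false_and,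
        or_false, false_or, and_true, true_and] at hb
      simp_all
  -- EN neighbor control
  have hENnone : ∀ a : T.V ⊕ Fin 4, a ∉ NS →
      {b | s(Sum.inl a, b) ∈ EN} ⊆ (∅ : Set ((T.V ⊕ Fin 4) ⊕ Unit)) := by
    rintro a ha b hb
    obtain ⟨u, hu, he⟩ := hb
    rw [Sym2.eq_iff] at he
    rcases he with ⟨h1, h2⟩ | ⟨h1, h2⟩
    · exact absurd (Sum.inl.inj h1 ▸ hu) ha
    · exact absurd h1 (by simp)
  have hENone : ∀ a : T.V ⊕ Fin 4,
      {b | s(Sum.inl a, b) ∈ EN} ⊆ ({Sum.inr ()} : Set ((T.V ⊕ Fin 4) ⊕ Unit)) := by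
    rintro a b hb
    obtain ⟨u, hu, he⟩ := hb
    rw [Sym2.eq_iff] at he
    rcases he with ⟨h1, h2⟩ | ⟨h1, h2⟩
    · simp [h2]
    · exact absurd h1 (by simp)
  set GG := (H.map Function.Embedding.inl) ⊔ SimpleGraph.fromEdgeSet EN with hGG
  -- degrees in GG
  have hdegG_l : ∀ a : T.V ⊕ Fin 4, a ∉ NS →
      (GG.neighborSet (Sum.inl a)).ncard ≤ (H.neighborSet a).ncard := by
    intro a ha
    have := deg_supMap_inl H EN a ∅ (hENnone a ha)
    simpa [hGG] using this
  have hdegG_l1 : ∀ a : T.V ⊕ Fin 4,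
      (GG.neighborSet (Sum.inl a)).ncard ≤ (H.neighborSet a).ncard + 1 := by
    intro a
    have := deg_supMap_inl H EN a {Sum.inr ()} (hENone a)
    simpa [hGG] using this
  have hinlNS : ∀ v : T.V, Sum.inl v ∉ NS := by
    intro v hv
    obtain ⟨n, _, hn⟩ := hv
    exact absurd hn (by simp)
  have hdegG_h : (GG.neighborSet (Sum.inr ())).ncard ≤ N.card := by
    have := deg_supMap_inr H EN ()
      ((fun n => (Sum.inl (Sum.inr n) : (T.V ⊕ Fin 4) ⊕ Unit)) '' (N : Set (Fin 4))) ?_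
    · rwa [Set.ncard_image_of_injective _
        (fun a b hab => Sum.inr.inj (Sum.inl.inj hab)), Set.ncard_coe_finset] at this
    · rintro b ⟨u, hu, he⟩
      rw [Sym2.eq_iff] at he
      rcases he with ⟨h1, h2⟩ | ⟨h1, h2⟩
      · exact absurd h1 (by simp)
      · obtain ⟨n, hn, rfl⟩ := hu
        exact ⟨n, hn, h2.symm⟩
  -- edge count lower bounds
  have hmH : T.G.edgeSet.ncard + 4 ≤ H.edgeSet.ncard := by
    have hA : Sym2.map Sum.inl '' T.G.edgeSet ⊆ H.edgeSet :=
      supMap_mapEdges_subset T.G E1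
    have hB : E1 ⊆ H.edgeSet := by
      intro z hz
      simp only [hE1, Set.mem_insert_iff, Set.mem_singleton_iff] at hz
      rcases hz with rfl | rfl | rfl | rfl <;>
        exact supMap_adj_edge T.G E1 (by simp [hE1]) (by simp)
    have hd : Disjoint (Sym2.map Sum.inl '' T.G.edgeSet) E1 := by
      rw [Set.disjoint_left]
      rintro z ⟨z', _, rfl⟩ hz
      induction z' using Sym2.ind with
      | _ u v =>
        rw [Sym2.map_pair_eq] at hz
        simp [hE1, Sym2.eq_iff] at hz
    have hcardE1 : E1.ncard = 4 := by
      rw [hE1, Set.ncard_insert_of_notMem (by simp [Sym2.eq_iff]),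
        Set.ncard_insert_of_notMem (by simp [Sym2.eq_iff]),
        Set.ncard_insert_of_notMem (by simp [Sym2.eq_iff]), Set.ncard_singleton]
    have := ncard_edge_lb H _ _ hA hB hd
    rwa [Set.ncard_image_of_injective _ (Sym2.map.injective Sum.inl_injective),
      hcardE1] at this
  have hmG : H.edgeSet.ncard + N.card ≤ GG.edgeSet.ncard := by
    have hA : Sym2.map Sum.inl '' H.edgeSet ⊆ GG.edgeSet :=
      supMap_mapEdges_subset H EN
    have hC : ((fun n => s((Sum.inl (Sum.inr n) : (T.V ⊕ Fin 4) ⊕ Unit), Sum.inr ()))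
        '' (N : Set (Fin 4))) ⊆ GG.edgeSet := by
      rintro z ⟨n, hn, rfl⟩
      exact supMap_adj_edge H EN ⟨Sum.inr n, ⟨n, hn, rfl⟩, rfl⟩ (by simp)
    have hd : Disjoint (Sym2.map Sum.inl '' H.edgeSet)
        ((fun n => s((Sum.inl (Sum.inr n) : (T.V ⊕ Fin 4) ⊕ Unit), Sum.inr ()))
          '' (N : Set (Fin 4))) := by
      rw [Set.disjoint_left]
      rintro z ⟨z', _, rfl⟩ ⟨n, _, he⟩
      induction z' using Sym2.ind with
      | _ u v =>
        rw [Sym2.map_pair_eq, Sym2.eq_iff] at he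
        rcases he with ⟨h1, h2⟩ | ⟨h1, h2⟩ <;> exact absurd h2 (by simp)
    have hinj : Function.Injective
        (fun n => s((Sum.inl (Sum.inr n) : (T.V ⊕ Fin 4) ⊕ Unit), Sum.inr ())) := by
      intro a b hab
      simp only [Sym2.eq_iff, reduceCtorEq, Sum.inl.injEq, Sum.inr.injEq,
        and_false, false_and, or_false, and_true] at hab
      exact hab
    have := ncard_edge_lb GG _ _ hA hC hd
    rwa [Set.ncard_image_of_injective _ (Sym2.map.injective Sum.inl_injective),
      Set.ncard_image_of_injective _ hinj, Set.ncard_coe_finset] at this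
  -- sum over the image of S
  have hsumS : ∑ v ∈ S, (GG.neighborSet (Sum.inl (Sum.inl v))).ncard ≤
      (∑ v ∈ S, (T.G.neighborSet v).ncard) + 1 := by
    calc ∑ v ∈ S, (GG.neighborSet (Sum.inl (Sum.inl v))).ncard
        ≤ ∑ v ∈ S, ((T.G.neighborSet v).ncard + (if v = y then 1 else 0)) :=
          Finset.sum_le_sum fun v _ =>
            le_trans (hdegG_l (Sum.inl v) (hinlNS v)) (hdegv v)
      _ = (∑ v ∈ S, (T.G.neighborSet v).ncard) + ∑ v ∈ S, (if v = y then 1 else 0) :=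
          Finset.sum_add_distrib
      _ ≤ (∑ v ∈ S, (T.G.neighborSet v).ncard) + 1 := by
          have := Finset.sum_ite_eq' S y (fun _ => (1 : ℕ))
          simp only [this]
          split <;> omega
  have hinjf : Function.Injective
      (fun u => (Sum.inl (Sum.inl u) : (T.V ⊕ Fin 4) ⊕ Unit)) :=
    fun a b hab => Sum.inl.inj (Sum.inl.inj hab)
  -- build the dominating and annihilating sets
  obtain ⟨DG, SG, hTD, hc, hAnn⟩ : ∃ DG SG : Finset ((T.V ⊕ Fin 4) ⊕ Unit),
      (∀ a, ∃ u ∈ DG, GG.Adj a u) ∧ DG.card = SG.card + 1 ∧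
      (∑ v ∈ SG, (GG.neighborSet v).ncard) ≤ GG.edgeSet.ncard := by
    by_cases hN : 1 ∈ N ∨ 2 ∈ N
    · refine ⟨D.image (fun u => Sum.inl (Sum.inl u)) ∪
        {Sum.inl (Sum.inr 1), Sum.inl (Sum.inr 2)},
        S.image (fun u => Sum.inl (Sum.inl u)) ∪
        {Sum.inl (Sum.inr 3), Sum.inr ()}, ?_, ?_, ?_⟩
      · rintro (⟨u | i⟩ | h')
        · obtain ⟨q, hq, hadj⟩ := hD u
          exact ⟨Sum.inl (Sum.inl q), by simp [hq], gadj (hTadj hadj)⟩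
        · fin_cases i
          · exact ⟨Sum.inl (Sum.inr 1), by simp, gadj h01⟩
          · exact ⟨Sum.inl (Sum.inr 2), by simp, gadj h12⟩
          · exact ⟨Sum.inl (Sum.inr 1), by simp, gadj h12.symm⟩
          · exact ⟨Sum.inl (Sum.inr 2), by simp, gadj h23.symm⟩
        · rcases hN with h1 | h2
          · exact ⟨Sum.inl (Sum.inr 1), by simp, ghadj 1 h1⟩
          · exact ⟨Sum.inl (Sum.inr 2), by simp, ghadj 2 h2⟩
      · rw [Finset.card_union_of_disjoint (by simp [Finset.disjoint_left]),
          Finset.card_union_of_disjoint (by simp [Finset.disjoint_left]),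
          Finset.card_image_of_injective _ hinjf,
          Finset.card_image_of_injective _ hinjf,
          Finset.card_pair (by simp), Finset.card_pair (by simp), hcard]
      · rw [Finset.sum_union (by simp [Finset.disjoint_left]),
          Finset.sum_image (fun a _ b _ hab => hinjf hab),
          Finset.sum_insert (by simp), Finset.sum_singleton]
        have h3 : (GG.neighborSet (Sum.inl (Sum.inr 3))).ncard ≤ 2 :=
          le_trans (hdegG_l1 (Sum.inr 3)) (by omega)
        omega
    · push_neg at hN
      obtain ⟨hN1, hN2⟩ := hN
      have hNeq : N = ({0, 3} : Finset (Fin 4)) := by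
        apply Finset.eq_of_subset_of_card_le
        · intro n hn
          fin_cases n
          · simp
          · exact absurd hn hN1
          · exact absurd hn hN2
          · simp
        · rw [Finset.card_pair (by decide)]
          exact htN
      have hN0 : 0 ∈ N := by rw [hNeq]; simp
      have hNcard : N.card = 2 := by rw [hNeq]; decide
      have h1NS : (Sum.inr 1 : T.V ⊕ Fin 4) ∉ NS := by
        rintro ⟨n, hn, he⟩
        rcases Sum.inr.inj he with rfl
        exact hN1 hn
      refine ⟨D.image (fun u => Sum.inl (Sum.inl u)) ∪
        {Sum.inl (Sum.inr 0), Sum.inl (Sum.inr 1), Sum.inl (Sum.inr 2)},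
        S.image (fun u => Sum.inl (Sum.inl u)) ∪
        {Sum.inl (Sum.inr 1), Sum.inl (Sum.inr 3), Sum.inr ()}, ?_, ?_, ?_⟩
      · rintro (⟨u | i⟩ | h')
        · obtain ⟨q, hq, hadj⟩ := hD u
          exact ⟨Sum.inl (Sum.inl q), by simp [hq], gadj (hTadj hadj)⟩
        · fin_cases i
          · exact ⟨Sum.inl (Sum.inr 1), by simp, gadj h01⟩
          · exact ⟨Sum.inl (Sum.inr 2), by simp, gadj h12⟩
          · exact ⟨Sum.inl (Sum.inr 1), by simp, gadj h12.symm⟩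
          · exact ⟨Sum.inl (Sum.inr 2), by simp, gadj h23.symm⟩
        · exact ⟨Sum.inl (Sum.inr 0), by simp, ghadj 0 hN0⟩
      · rw [Finset.card_union_of_disjoint (by simp [Finset.disjoint_left]),
          Finset.card_union_of_disjoint (by simp [Finset.disjoint_left]),
          Finset.card_image_of_injective _ hinjf,
          Finset.card_image_of_injective _ hinjf, hcard,
          Finset.card_insert_of_notMem (by simp),
          Finset.card_insert_of_notMem (by simp),
          Finset.card_insert_of_notMem (by simp),
          Finset.card_insert_of_notMem (by simp),
          Finset.card_singleton]
        simp
      · rw [Finset.sum_union (by simp [Finset.disjoint_left]),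
          Finset.sum_image (fun a _ b _ hab => hinjf hab),
          Finset.sum_insert (by simp), Finset.sum_insert (by simp),
          Finset.sum_singleton]
        have hw : (GG.neighborSet (Sum.inl (Sum.inr 1))).ncard ≤ 2 :=
          le_trans (hdegG_l (Sum.inr 1) h1NS) hdegH1
        have h3 : (GG.neighborSet (Sum.inl (Sum.inr 3))).ncard ≤ 2 :=
          le_trans (hdegG_l1 (Sum.inr 3)) (by omega)
        omega
  -- conclude
  haveI : Finite ((T.V ⊕ Fin 4) ⊕ Unit) := inferInstance
  haveI := Fintype.ofFinite ((T.V ⊕ Fin 4) ⊕ Unit)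
  have hbdd : BddAbove {k | ∃ S : Finset ((T.V ⊕ Fin 4) ⊕ Unit), S.card = k ∧
      ∑ v ∈ S, (GG.neighborSet v).ncard ≤ GG.edgeSet.ncard} := by
    refine ⟨Fintype.card ((T.V ⊕ Fin 4) ⊕ Unit), ?_⟩
    rintro k ⟨Sk, rfl, -⟩
    simpa using Finset.card_le_univ Sk
  have h1 : totalDominationNumber GG ≤ DG.card := Nat.sInf_le ⟨DG, hTD, rfl⟩
  have h2 : SG.card ≤ annihilationNumber GG := le_csSup hbdd ⟨SG, rfl, hAnn⟩
  omega
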